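/- Define F: ℂ⁶ → ℂ⁶ by F(a,b,c,d,e,f) = (d, (b²-df)/e, f, (d²-fb)/a, b, (f²-bd)/c) and G(a,b,c,d,e,f) = ((a²-ce)/d, e, (c²-ea)/f, a, (e²-ac)/b, c). Then G is a two-sided inverse of F wherever both compositions are defined: for any (a,b,c,d,e,f) with all relevant denominators nonzero, G(F(a,b,c,d,e,f)) = (a,b,c,d,e,f) and F(G(a,b,c,d,e,f)) = (a,b,c,d,e,f). -/

import Mathlib

noncomputable def devronF : ℂ × ℂ × ℂ × ℂ × ℂ × ℂ → ℂ × ℂ × ℂ × ℂ × ℂ × ℂ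
  | (a, b, c, d, e, f) =>
      (d, (b ^ 2 - d * f) / e, f, (d ^ 2 - f * b) / a, b, (f ^ 2 - b * d) / c)

noncomputable def devronG : ℂ × ℂ × ℂ × ℂ × ℂ × ℂ → ℂ × ℂ × ℂ × ℂ × ℂ × ℂ
  | (a, b, c, d, e, f) =>
      ((a ^ 2 - c * e) / d, e, (c ^ 2 - e * a) / f, a, (e ^ 2 - a * c) / b, c)

/-- `G` is a two-sided inverse of `F` wherever all relevant denominators are nonzero. -/
theorem devron_stmt_2 (a b c d e f : ℂ)
    (ha : a ≠ 0) (hb : b ≠ 0) (hc : c ≠ 0) (hd : d ≠ 0) (he : e ≠ 0) (hf : f ≠ 0)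
    (h1 : b ^ 2 - d * f ≠ 0) (h2 : d ^ 2 - f * b ≠ 0) (h3 : f ^ 2 - b * d ≠ 0)
    (h4 : a ^ 2 - c * e ≠ 0) (h5 : c ^ 2 - e * a ≠ 0) (h6 : e ^ 2 - a * c ≠ 0) :
    devronG (devronF (a, b, c, d, e, f)) = (a, b, c, d, e, f) ∧
    devronF (devronG (a, b, c, d, e, f)) = (a, b, c, d, e, f) := by
  constructor <;>
  · simp only [devronF, devronG, Prod.mk.injEq]
    refine ⟨?_, ?_, ?_, ?_, ?_, ?_⟩ <;> simp [div_div_cancel₀, *]
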